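/- In the symmetric case m1 = m2 = m/k with k > 2, the pure price of anarchy at the unique equilibrium equals PPoA = √((1+p)²/(16(k−2)²) + 4(3−p)/(16(k−2)) + 1/4) + 1/2 − (p+1)/(4(k−2)), and PPoA tends to 1 as k → +∞. -/

import Mathlib

/-- Average reward of pool 1 in the two-player miner's dilemma with betrayal,
where the total mining power is `m1 + m2 + t`. -/
noncomputable def r1 (m1 m2 t p x1 x2 : ℝ) : ℝ :=
  (m1*m2 + m1*x1 + p*m2*x2 - (1-p)*x1^2 - (1-p)*x1*x2) /
    (((m1+m2+t) - (1-p)*(x1+x2)) * (m1*m2 + m1*x1 + m2*x2))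

/-- Average reward of pool 2. -/
noncomputable def r2 (m1 m2 t p x1 x2 : ℝ) : ℝ :=
  (m1*m2 + m2*x2 + p*m1*x1 - (1-p)*x2^2 - (1-p)*x1*x2) /
    (((m1+m2+t) - (1-p)*(x1+x2)) * (m1*m2 + m1*x1 + m2*x2))

/-- `(x1, x2)` is a pure Nash equilibrium of the two-player miner's dilemma game. -/
noncomputable def IsNash (m1 m2 t p x1 x2 : ℝ) : Prop :=
  x1 ∈ Set.Icc 0 m1 ∧ x2 ∈ Set.Icc 0 m2 ∧
  (∀ x ∈ Set.Icc (0:ℝ) m1, r1 m1 m2 t p x x2 ≤ r1 m1 m2 t p x1 x2) ∧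
  (∀ x ∈ Set.Icc (0:ℝ) m2, r2 m1 m2 t p x1 x ≤ r2 m1 m2 t p x1 x2)

open Filter Set

/-- Marginal-gain polynomial `N'·D − N·D'` for player 1 in the symmetric game
with pool sizes `a = m/k`. -/
noncomputable def Gm (a k p x y : ℝ) : ℝ :=
  (a - 2*(1-p)*x - (1-p)*y) * ((k*a - (1-p)*(x+y)) * (a*(a+x+y)))
  - (a*a + a*x + p*a*y - (1-p)*x^2 - (1-p)*x*y) *
      (-(1-p)*(a*(a+x+y)) + (k*a - (1-p)*(x+y))*a)

private lemma deriv_nonneg_right' {f : ℝ → ℝ} {d lo hi x : ℝ} (hf : HasDerivAt f d x)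
    (hlo : lo ≤ x) (hlt : x < hi) (hmin : ∀ u, lo ≤ u → u ≤ hi → f x ≤ f u) : 0 ≤ d := by
  have h := hf.hasDerivWithinAt (s := Set.Ioi x)
  rw [hasDerivWithinAt_iff_tendsto_slope] at h
  have hs : Set.Ioi x \ {x} = Set.Ioi x := Set.diff_singleton_eq_self (by simp)
  rw [hs] at h
  refine ge_of_tendsto h ?_
  filter_upwards [Ioo_mem_nhdsGT_of_mem ⟨le_refl x, hlt⟩] with u hu
  rw [slope_def_field]
  have := hmin u (hlo.trans hu.1.le) hu.2.le
  exact div_nonneg (by linarith) (by linarith [hu.1])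

private lemma deriv_nonpos_left' {f : ℝ → ℝ} {d lo hi x : ℝ} (hf : HasDerivAt f d x)
    (hlo : lo < x) (hle : x ≤ hi) (hmin : ∀ u, lo ≤ u → u ≤ hi → f x ≤ f u) : d ≤ 0 := by
  have h := hf.hasDerivWithinAt (s := Set.Iio x)
  rw [hasDerivWithinAt_iff_tendsto_slope] at h
  have hs : Set.Iio x \ {x} = Set.Iio x := Set.diff_singleton_eq_self (by simp)
  rw [hs] at h
  refine le_of_tendsto h ?_
  filter_upwards [Ioo_mem_nhdsLT_of_mem ⟨hlo, le_refl x⟩] with u hu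
  rw [slope_def_field]
  have := hmin u (by linarith [hu.1]) (hu.2.le.trans hle)
  exact div_nonpos_of_nonneg_of_nonpos (by linarith) (by linarith [hu.2])

private lemma min_tri {f : ℝ → ℝ} {d lo hi x : ℝ} (hf : HasDerivAt f d x)
    (hx0 : lo ≤ x) (hx1 : x ≤ hi) (hlh : lo < hi)
    (hmin : ∀ u, lo ≤ u → u ≤ hi → f x ≤ f u) :
    (x = lo ∧ 0 ≤ d) ∨ (x = hi ∧ d ≤ 0) ∨ (lo < x ∧ x < hi ∧ d = 0) := by
  rcases eq_or_lt_of_le hx0 with h0 | h0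
  · exact Or.inl ⟨h0.symm, deriv_nonneg_right' hf hx0 (h0 ▸ hlh) hmin⟩
  · rcases eq_or_lt_of_le hx1 with h1 | h1
    · exact Or.inr (Or.inl ⟨h1, deriv_nonpos_left' hf h0 hx1 hmin⟩)
    · exact Or.inr (Or.inr ⟨h0, h1, le_antisymm (deriv_nonpos_left' hf h0 hx1 hmin)
        (deriv_nonneg_right' hf hx0 h1 hmin)⟩)

private lemma foc (a k p x y : ℝ) (ha : 0 < a) (hk : 2 < k) (hp0 : 0 ≤ p) (hp1 : p < 1)
    (hx0 : 0 ≤ x) (hxa : x ≤ a) (hy0 : 0 ≤ y) (hya : y ≤ a)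
    (hN : ∀ u, 0 ≤ u → u ≤ a →
      (a*a + a*u + p*a*y - (1-p)*u^2 - (1-p)*u*y) /
        ((k*a - (1-p)*(u+y)) * (a*(a+u+y)))
      ≤ (a*a + a*x + p*a*y - (1-p)*x^2 - (1-p)*x*y) /
        ((k*a - (1-p)*(x+y)) * (a*(a+x+y)))) :
    (x = 0 ∧ Gm a k p 0 y ≤ 0) ∨ (x = a ∧ 0 ≤ Gm a k p a y) ∨
      (0 < x ∧ x < a ∧ Gm a k p x y = 0) := by
  have hden : ∀ u, 0 ≤ u → u ≤ a → 0 < (k*a - (1-p)*(u+y)) * (a*(a+u+y)) := by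
    intro u hu0 hua
    have h1 : 0 < k*a - (1-p)*(u+y) := by nlinarith
    have h2 : 0 < a*(a+u+y) := by nlinarith
    exact mul_pos h1 h2
  have hD : HasDerivAt (fun u : ℝ =>
      (a*a + a*x + p*a*y - (1-p)*x^2 - (1-p)*x*y) * ((k*a - (1-p)*(u+y)) * (a*(a+u+y)))
      - (a*a + a*u + p*a*y - (1-p)*u^2 - (1-p)*u*y) * ((k*a - (1-p)*(x+y)) * (a*(a+x+y))))
      (-(Gm a k p x y)) x := by
    have h1 : HasDerivAt (fun u : ℝ => k*a - (1-p)*(u+y)) (-(1-p)) x := by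
      simpa using (((hasDerivAt_id x).add_const y).const_mul (1-p)).const_sub (k*a)
    have h2 : HasDerivAt (fun u : ℝ => a*(a+u+y)) a x := by
      simpa using (((hasDerivAt_id x).const_add a).add_const y).const_mul a
    have h3 := h1.mul h2
    have h4 : HasDerivAt (fun u : ℝ => a*a + a*u + p*a*y - (1-p)*u^2 - (1-p)*u*y)
        (a - 2*(1-p)*x - (1-p)*y) x := by
      have ha' : HasDerivAt (fun u : ℝ => a*a + a*u + p*a*y) a x := by
        simpa using (((hasDerivAt_id x).const_mul a).const_add (a*a)).add_const (p*a*y)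
      have hb : HasDerivAt (fun u : ℝ => (1-p)*u^2) ((1-p)*(2*x)) x := by
        simpa using (hasDerivAt_pow 2 x).const_mul (1-p)
      have hc : HasDerivAt (fun u : ℝ => (1-p)*u*y) ((1-p)*y) x := by
        simpa using (((hasDerivAt_id x).const_mul (1-p)).mul_const y)
      have := (ha'.sub hb).sub hc
      refine this.congr_deriv ?_
      ring
    have h5 := (h3.const_mul (a*a + a*x + p*a*y - (1-p)*x^2 - (1-p)*x*y)).sub
      (h4.mul_const ((k*a - (1-p)*(x+y)) * (a*(a+x+y))))
    refine h5.congr_deriv ?_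
    simp only [Gm]
    ring
  have hmin : ∀ u, 0 ≤ u → u ≤ a →
      (fun u : ℝ =>
      (a*a + a*x + p*a*y - (1-p)*x^2 - (1-p)*x*y) * ((k*a - (1-p)*(u+y)) * (a*(a+u+y)))
      - (a*a + a*u + p*a*y - (1-p)*u^2 - (1-p)*u*y) * ((k*a - (1-p)*(x+y)) * (a*(a+x+y)))) x
      ≤ (fun u : ℝ =>
      (a*a + a*x + p*a*y - (1-p)*x^2 - (1-p)*x*y) * ((k*a - (1-p)*(u+y)) * (a*(a+u+y)))
      - (a*a + a*u + p*a*y - (1-p)*u^2 - (1-p)*u*y) * ((k*a - (1-p)*(x+y)) * (a*(a+x+y)))) u := by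
    intro u hu0 hua
    have h := (div_le_div_iff₀ (hden u hu0 hua) (hden x hx0 hxa)).mp (hN u hu0 hua)
    simp only
    linarith
  have := min_tri hD hx0 hxa ha hmin
  rcases this with ⟨h0, hd⟩ | ⟨h1, hd⟩ | ⟨h0, h1, hd⟩
  · subst h0; exact Or.inl ⟨rfl, by linarith⟩
  · subst h1; exact Or.inr (Or.inl ⟨rfl, by linarith⟩)
  · exact Or.inr (Or.inr ⟨h0, h1, by linarith⟩)

private lemma cornerA (a k p : ℝ) (ha : 0 < a) (hp1 : p < 1)
    (h : Gm a k p 0 0 ≤ 0) : False := by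
  have hGm : Gm a k p 0 0 = a^4*(1-p) := by simp only [Gm]; ring
  nlinarith [mul_pos (pow_pos ha 4) (by linarith : (0:ℝ) < 1-p)]

private lemma cornerB (a k p : ℝ) (ha : 0 < a) (hk : 2 < k) (hp0 : 0 ≤ p) (hp1 : p < 1)
    (h : 0 ≤ Gm a k p a 0) : False := by
  have hGm : Gm a k p a 0 = a^4*(1-p)*(5-p-3*k) := by simp only [Gm]; ring
  have := mul_neg_of_pos_of_neg (mul_pos (pow_pos ha 4) (by linarith : (0:ℝ) < 1-p))
    (by linarith : 5-p-3*k < 0)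
  linarith [hGm ▸ h]

private lemma cornerD (a k p : ℝ) (ha : 0 < a) (hk : 2 < k) (hp0 : 0 ≤ p) (hp1 : p < 1)
    (h : 0 ≤ Gm a k p a a) : False := by
  have hGm : Gm a k p a a = a^4*(1-p)*(12-3*p-6*k) := by simp only [Gm]; ring
  have := mul_neg_of_pos_of_neg (mul_pos (pow_pos ha 4) (by linarith : (0:ℝ) < 1-p))
    (by linarith : 12-3*p-6*k < 0)
  linarith [hGm ▸ h]

private lemma caseC (a k p z : ℝ) (ha : 0 < a) (hp0 : 0 ≤ p) (hp1 : p < 1)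
    (hz0 : 0 < z) (hEq : Gm a k p z 0 = 0) (hIq : Gm a k p 0 z ≤ 0) : False := by
  have hq : (0:ℝ) < 1 - p := by linarith
  have hEq' : a*a + 2*a*(1-k)*z + (2-p-k)*z^2 = 0 := by
    have hD : Gm a k p z 0 = a^2*(1-p)*(a*a + 2*a*(1-k)*z + (2-p-k)*z^2) := by
      simp only [Gm]; ring
    have hne : a^2*(1-p) ≠ 0 := ne_of_gt (mul_pos (pow_pos ha 2) hq)
    rcases mul_eq_zero.mp (hD ▸ hEq) with h | h
    · exact absurd h hne
    · exact h
  have hI : Gm a k p 0 z * (z*(2*a+z)) ≤ 0 :=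
    mul_nonpos_of_nonpos_of_nonneg hIq (by positivity)
  have hid : Gm a k p 0 z * (z*(2*a+z)) =
      a*z*(1-p)*((1-p)*(z^2-a^2)^2 + (1+p)*a^2*(z+a)^2)
      + (a^2*(1-p)*z^2) * (a*a + 2*a*(1-k)*z + (2-p-k)*z^2) := by
    simp only [Gm]; ring
  rw [hid, hEq', mul_zero, add_zero] at hI
  have h1' : 0 < (1+p)*a^2*(z+a)^2 :=
    mul_pos (mul_pos (by linarith) (pow_pos ha 2)) (pow_pos (by linarith) 2)
  have h2' : 0 ≤ (1-p)*(z^2-a^2)^2 := mul_nonneg (by linarith) (sq_nonneg _)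
  have h3' : 0 < a*z*(1-p) := mul_pos (mul_pos ha hz0) hq
  nlinarith

private lemma caseG (a k p z : ℝ) (ha : 0 < a) (hp0 : 0 ≤ p) (hp1 : p < 1)
    (hz0 : 0 ≤ z) (hza : z < a)
    (hEq : Gm a k p z a = 0) (hIq : 0 ≤ Gm a k p a z) : False := by
  have hq : (0:ℝ) < 1 - p := by linarith
  have hI : 0 ≤ Gm a k p a z * (a^2*(1-p)*(z^2+4*a*z+a^2)) := by
    apply mul_nonneg hIq
    have h0 : 0 < z^2+4*a*z+a^2 := by nlinarith
    exact le_of_lt (mul_pos (mul_pos (pow_pos ha 2) hq) h0)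
  have hid : Gm a k p a z * (a^2*(1-p)*(z^2+4*a*z+a^2)) =
      -(a^3*(1-p)^2*(a-z)*((1-p)*z^4 + 4*(1-p)*a*z^3 + (5-3*p)*a^2*z^2
        + 4*(1+p)*a^3*z + 4*(1+p)*a^4))
      + (a^2*(1-p)*(z^2+2*a*z+3*a^2)) * (Gm a k p z a) := by
    simp only [Gm]; ring
  rw [hid, hEq, mul_zero, add_zero] at hI
  have hW : 0 < (1-p)*z^4 + 4*(1-p)*a*z^3 + (5-3*p)*a^2*z^2 + 4*(1+p)*a^3*z + 4*(1+p)*a^4 := by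
    have t1 : 0 ≤ (1-p)*z^4 := mul_nonneg (by linarith) (pow_nonneg hz0 4)
    have t2 : 0 ≤ 4*(1-p)*a*z^3 :=
      mul_nonneg (mul_nonneg (by linarith) ha.le) (pow_nonneg hz0 3)
    have t3 : 0 ≤ (5-3*p)*a^2*z^2 :=
      mul_nonneg (mul_nonneg (by linarith) (sq_nonneg a)) (sq_nonneg z)
    have t4 : 0 ≤ 4*(1+p)*a^3*z :=
      mul_nonneg (mul_nonneg (by linarith) (pow_nonneg ha.le 3)) hz0
    have t5 : 0 < 4*(1+p)*a^4 := mul_pos (by linarith) (pow_pos ha 4)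
    linarith
  have hfac : 0 < a^3*(1-p)^2*(a-z) :=
    mul_pos (mul_pos (pow_pos ha 3) (pow_pos hq 2)) (by linarith)
  nlinarith

set_option maxHeartbeats 1000000 in
private lemma interiorCase (a k p x y : ℝ) (ha : 0 < a) (hk : 2 < k) (hp0 : 0 ≤ p) (hp1 : p < 1)
    (hx0 : 0 < x) (hxa : x < a) (hy0 : 0 < y) (hya : y < a)
    (hG1 : Gm a k p x y = 0) (hG2 : Gm a k p y x = 0) :
    (a + a) / (a + a - (1-p)*(x + y)) =
      Real.sqrt ((1+p)^2/(16*(k-2)^2) + 4*(3-p)/(16*(k-2)) + 1/4) + 1/2 - (p+1)/(4*(k-2)) := by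
  have hq : (0:ℝ) < 1 - p := by linarith
  have hs1 : 0 ≤ (x+y)*(2*a-(x+y)) :=
    mul_nonneg (by linarith) (by linarith)
  have hQ0 : 0 ≤ a^2+2*a*(x+y)-(x+y)^2 := by nlinarith [hs1]
  have hQle : a^2+2*a*(x+y)-(x+y)^2 ≤ 2*a^2 := by nlinarith [sq_nonneg (x+y-a)]
  have hpq : 0 ≤ p*(a^2+2*a*(x+y)-(x+y)^2) := mul_nonneg hp0 hQ0
  have hbr : (1-p)*(a^2+2*a*(x+y)-(x+y)^2) - 2*a^2*k < 0 := by
    nlinarith [mul_pos (mul_pos ha ha) (by linarith : (0:ℝ) < k-1)]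
  have hKneg : (1-p)*((1-p)*(a^2+2*a*(x+y)-(x+y)^2) - 2*a^2*k) < 0 :=
    mul_neg_of_pos_of_neg hq hbr
  have hdiff : (x - y) * (a*((1-p)*((1-p)*(a^2+2*a*(x+y)-(x+y)^2) - 2*a^2*k))) = 0 := by
    simp only [Gm] at hG1 hG2
    linear_combination hG1 - hG2
  have hxy : x = y := by
    rcases mul_eq_zero.mp hdiff with h | h
    · linarith [sub_eq_zero.mp h]
    · exfalso
      have : a*((1-p)*((1-p)*(a^2+2*a*(x+y)-(x+y)^2) - 2*a^2*k)) < 0 :=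
        mul_neg_of_pos_of_neg ha hKneg
      exact this.ne h
  subst hxy
  have hQd : 2*(1-p)*x^2 - (2*k-1-p)*a*x + a*a = 0 := by
    have hfac : (a*(1-p)*(2*x+a)) * (2*(1-p)*x^2 - (2*k-1-p)*a*x + a*a) = 0 := by
      simp only [Gm] at hG1
      linear_combination hG1
    rcases mul_eq_zero.mp hfac with h | h
    · exact absurd h (ne_of_gt (mul_pos (mul_pos ha hq) (by linarith)))
    · exact h
  have hRnn : 0 ≤ (2*k-1-p)^2 - 8*(1-p) := by
    nlinarith [mul_pos (by linarith : (0:ℝ) < k-2) (by linarith : (0:ℝ) < k+1-p)]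
  set R := Real.sqrt ((2*k-1-p)^2 - 8*(1-p)) with hRdef
  have hR0 : 0 ≤ R := Real.sqrt_nonneg _
  have hR2 : R^2 = (2*k-1-p)^2 - 8*(1-p) := Real.sq_sqrt hRnn
  have hRpos : 0 < R := Real.sqrt_pos.mpr
    (by nlinarith [mul_pos (by linarith : (0:ℝ) < k-2) (by linarith : (0:ℝ) < k+1-p)])
  have hsq : (4*(1-p)*x - (2*k-1-p)*a - a*R) * (4*(1-p)*x - (2*k-1-p)*a + a*R) = 0 := by
    have : (4*(1-p)*x - (2*k-1-p)*a)^2 = (a*R)^2 := by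
      rw [mul_pow, hR2]
      linear_combination (8*(1-p)) * hQd
    linear_combination this
  have hmin : 4*(1-p)*x - (2*k-1-p)*a = -(a*R) := by
    rcases mul_eq_zero.mp hsq with h | h
    · exfalso
      have hplus : 4*(1-p)*x = (2*k-1-p)*a + a*R := by linarith [sub_eq_zero.mp h]
      have hle : 4*(1-p)*x ≤ 4*(1-p)*a := by nlinarith
      have hRle : R ≤ 4*(1-p) - (2*k-1-p) := by
        have h' : a*R ≤ a*(4*(1-p) - (2*k-1-p)) := by nlinarith
        exact (mul_le_mul_iff_right₀ ha).mp h'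
      have h10 : R*R ≤ (4*(1-p)-(2*k-1-p))*(4*(1-p)-(2*k-1-p)) :=
        mul_self_le_mul_self hR0 hRle
      nlinarith [mul_pos hq (by linarith : (0:ℝ) < 2*k+p-4)]
    · linarith [sub_eq_zero.mp (by linarith [h] : 4*(1-p)*x - (2*k-1-p)*a - (-(a*R)) = 0)]
  have hk2 : (0:ℝ) < k - 2 := by linarith
  have hEeq : (1+p)^2/(16*(k-2)^2) + 4*(3-p)/(16*(k-2)) + 1/4 = (R/(4*(k-2)))^2 := by
    rw [div_pow, hR2]
    field_simp
    ring
  rw [hEeq, Real.sqrt_sq (div_nonneg hR0 (by linarith))]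
  have hprod : (4-(2*k-1-p)+R)*((2*k-1-p)-4+R) = 16*(k-2) := by linear_combination hR2
  have hdenpos : 0 < 4-(2*k-1-p)+R := by
    by_contra hc
    push_neg at hc
    have h2' : 0 < (2*k-1-p)-4+R := by linarith
    have := mul_nonpos_of_nonpos_of_nonneg hc h2'.le
    nlinarith
  have hden2 : a + a - (1-p)*(x+x) = a*(4-(2*k-1-p)+R)/2 := by
    linear_combination (-(1:ℝ)/2) * hmin
  rw [hden2]
  have hdne : a*(4-(2*k-1-p)+R)/2 ≠ 0 := ne_of_gt (div_pos (mul_pos ha hdenpos) two_pos)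
  rw [div_eq_iff hdne]
  have hT : R/(4*(k-2)) + 1/2 - (p+1)/(4*(k-2)) = (R + (2*k-1-p) - 4)/(4*(k-2)) := by
    field_simp
    ring
  rw [hT, div_mul_eq_mul_div, eq_div_iff (by positivity : (4:ℝ)*(k-2) ≠ 0)]
  linear_combination ((a:ℝ)/2) * hprod - a * hR2

/-- Symmetric case `m1 = m2 = m/k` with `k > 2`: explicit formula for the
pure price of anarchy at the unique equilibrium, and its limit `1` as `k → ∞`. -/
theorem stmt18 (m1 m2 t p k : ℝ) (hm1 : 0 < m1) (hm2 : 0 < m2) (ht : 0 ≤ t)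
    (hp0 : 0 ≤ p) (hp1 : p < 1) (hk : 2 < k)
    (h1 : m1 = (m1+m2+t)/k) (h2 : m2 = (m1+m2+t)/k) :
    (∀ x1s x2s : ℝ, IsNash m1 m2 t p x1s x2s →
      (m1 + m2) / (m1 + m2 - (1-p)*(x1s + x2s)) =
        Real.sqrt ((1+p)^2/(16*(k-2)^2) + 4*(3-p)/(16*(k-2)) + 1/4)
          + 1/2 - (p+1)/(4*(k-2))) ∧
    Filter.Tendsto (fun k' : ℝ =>
        Real.sqrt ((1+p)^2/(16*(k'-2)^2) + 4*(3-p)/(16*(k'-2)) + 1/4)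
          + 1/2 - (p+1)/(4*(k'-2)))
      Filter.atTop (nhds 1) := by
  have hk0 : k ≠ 0 := by linarith
  have hm12 : m2 = m1 := h2.trans h1.symm
  have hka : k * m1 = m1 + m2 + t := by
    have h1' := h1
    field_simp [hk0] at h1'
    linear_combination h1'
  have hka2 : m1 + m1 + t = k * m1 := by rw [hka, hm12]
  constructor
  · rintro x1s x2s ⟨⟨hx0, hxa⟩, ⟨hy0, hya'⟩, hB1, hB2⟩
    have hya : x2s ≤ m1 := hm12 ▸ hya'
    have e1 : ∀ v, r1 m1 m2 t p v x2s =
        (m1*m1 + m1*v + p*m1*x2s - (1-p)*v^2 - (1-p)*v*x2s) /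
          ((k*m1 - (1-p)*(v+x2s)) * (m1*(m1+v+x2s))) := by
      intro v
      simp only [r1, hm12]
      rw [hka2]
      ring
    have e2 : ∀ v, r2 m1 m2 t p x1s v =
        (m1*m1 + m1*v + p*m1*x1s - (1-p)*v^2 - (1-p)*v*x1s) /
          ((k*m1 - (1-p)*(v+x1s)) * (m1*(m1+v+x1s))) := by
      intro v
      simp only [r2, hm12]
      rw [hka2]
      ring
    have key1 : ∀ u, 0 ≤ u → u ≤ m1 →
        (m1*m1 + m1*u + p*m1*x2s - (1-p)*u^2 - (1-p)*u*x2s) /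
          ((k*m1 - (1-p)*(u+x2s)) * (m1*(m1+u+x2s)))
        ≤ (m1*m1 + m1*x1s + p*m1*x2s - (1-p)*x1s^2 - (1-p)*x1s*x2s) /
          ((k*m1 - (1-p)*(x1s+x2s)) * (m1*(m1+x1s+x2s))) := by
      intro u hu0 hua
      have H := hB1 u ⟨hu0, hua⟩
      rwa [e1 u, e1 x1s] at H
    have key2 : ∀ u, 0 ≤ u → u ≤ m1 →
        (m1*m1 + m1*u + p*m1*x1s - (1-p)*u^2 - (1-p)*u*x1s) /
          ((k*m1 - (1-p)*(u+x1s)) * (m1*(m1+u+x1s)))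
        ≤ (m1*m1 + m1*x2s + p*m1*x1s - (1-p)*x2s^2 - (1-p)*x2s*x1s) /
          ((k*m1 - (1-p)*(x2s+x1s)) * (m1*(m1+x2s+x1s))) := by
      intro u hu0 hua
      have H := hB2 u ⟨hu0, hm12 ▸ hua⟩
      rwa [e2 u, e2 x2s] at H
    have T1 := foc m1 k p x1s x2s hm1 hk hp0 hp1 hx0 hxa hy0 hya key1
    have T2 := foc m1 k p x2s x1s hm1 hk hp0 hp1 hy0 hya hx0 hxa key2
    rcases T1 with ⟨hxz, hc1⟩ | ⟨hxA, hc1⟩ | ⟨hxlo, hxhi, hG1⟩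
    · -- x1s = 0
      rcases T2 with ⟨hyz, hc2⟩ | ⟨hyA, hc2⟩ | ⟨hylo, hyhi, hG2⟩
      · rw [hyz] at hc1
        exact absurd hc1 (fun h => cornerA m1 k p hm1 hp1 h)
      · rw [hxz] at hc2
        exact absurd hc2 (fun h => cornerB m1 k p hm1 hk hp0 hp1 h)
      · rw [hxz] at hG2
        exact absurd hG2 (fun h => caseC m1 k p x2s hm1 hp0 hp1 hylo h hc1)
    · -- x1s = m1
      rcases T2 with ⟨hyz, hc2⟩ | ⟨hyA, hc2⟩ | ⟨hylo, hyhi, hG2⟩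
      · rw [hyz] at hc1
        exact absurd hc1 (fun h => cornerB m1 k p hm1 hk hp0 hp1 h)
      · rw [hyA] at hc1
        exact absurd hc1 (fun h => cornerD m1 k p hm1 hk hp0 hp1 h)
      · rw [hxA] at hG2
        exact absurd hG2 (fun h => caseG m1 k p x2s hm1 hp0 hp1 hylo.le hyhi h hc1)
    · -- x1s interior
      rcases T2 with ⟨hyz, hc2⟩ | ⟨hyA, hc2⟩ | ⟨hylo, hyhi, hG2⟩
      · rw [hyz] at hG1
        exact absurd hG1 (fun h => caseC m1 k p x1s hm1 hp0 hp1 hxlo h hc2)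
      · rw [hyA] at hG1
        exact absurd hG1 (fun h => caseG m1 k p x1s hm1 hp0 hp1 hxlo.le hxhi h hc2)
      · rw [hm12]
        exact interiorCase m1 k p x1s x2s hm1 hk hp0 hp1 hxlo hxhi hylo hyhi hG1 hG2
  · -- the limit
    have hb : Tendsto (fun k' : ℝ => k' - 2) atTop atTop := by
      simpa [sub_eq_add_neg] using tendsto_atTop_add_const_right atTop (-2) tendsto_id
    have hinv : Tendsto (fun k' : ℝ => (k'-2)⁻¹) atTop (nhds 0) :=
      hb.inv_tendsto_atTop
    have hcont : Continuous (fun u : ℝ =>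
        Real.sqrt ((1+p)^2/16*u^2 + (3-p)/4*u + 1/4) + 1/2 - (p+1)/4*u) :=
      (((((continuous_const.mul (continuous_pow 2)).add
        (continuous_const.mul continuous_id)).add continuous_const).sqrt).add
          continuous_const).sub (continuous_const.mul continuous_id)
    have h0 : Real.sqrt ((1+p)^2/16*(0:ℝ)^2 + (3-p)/4*0 + 1/4) + 1/2 - (p+1)/4*0 = 1 := by
      have e : (1+p)^2/16*(0:ℝ)^2 + (3-p)/4*0 + 1/4 = (1/2)^2 := by norm_num
      rw [e, Real.sqrt_sq (by norm_num : (0:ℝ) ≤ 1/2)]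
      norm_num
    have hF : Tendsto (fun u : ℝ =>
        Real.sqrt ((1+p)^2/16*u^2 + (3-p)/4*u + 1/4) + 1/2 - (p+1)/4*u) (nhds 0) (nhds 1) := by
      have := hcont.tendsto 0
      rwa [h0] at this
    have hcomp := hF.comp hinv
    refine Filter.Tendsto.congr' ?_ hcomp
    filter_upwards [eventually_gt_atTop (2:ℝ)] with k' hk'
    have hne : k' - 2 ≠ 0 := ne_of_gt (by linarith)
    simp only [Function.comp]
    have e1 : (1+p)^2/16*((k'-2)⁻¹)^2 + (3-p)/4*(k'-2)⁻¹ + 1/4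
        = (1+p)^2/(16*(k'-2)^2) + 4*(3-p)/(16*(k'-2)) + 1/4 := by
      field_simp
      ring
    have e2 : (p+1)/4*(k'-2)⁻¹ = (p+1)/(4*(k'-2)) := by
      field_simp
    rw [e1, e2]
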